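/- Let W and Ŵ be diagonal matrices with positive diagonal entries such that W_{ii} ≥ 1 for all i, and Ŵ_{ii} = (2^{−k} ⌈W_{ii}^{1/2} · 2^k⌉)² for some integer k ≥ 0. Then for any matrix B, BᵀWB ⪯ BᵀŴB ⪯ (1 + 2^{−k+2}) BᵀWB. In particular, λ_max(BᵀŴB) ≤ (1 + 2^{−k+2}) λ_max(BᵀWB) and λ_min⁺(BᵀŴB) ≥ λ_min⁺(BᵀWB). -/

import Mathlib

open Matrix

/-- The largest eigenvalue of a symmetric matrix, as the supremum of the Rayleigh quotient
over unit vectors. -/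
noncomputable def lmax {k : Type*} [Fintype k] (M : Matrix k k ℝ) : ℝ :=
  ⨆ x : {x : k → ℝ // x ⬝ᵥ x = 1}, (x : k → ℝ) ⬝ᵥ (M *ᵥ (x : k → ℝ))

/-- The smallest nonzero eigenvalue of a symmetric PSD matrix: the infimum of the Rayleigh
quotient over unit vectors orthogonal to the null space. -/
noncomputable def lminPos {k : Type*} [Fintype k] (M : Matrix k k ℝ) : ℝ :=
  sInf {r : ℝ | ∃ x : k → ℝ, x ⬝ᵥ x = 1 ∧ (∀ y, M *ᵥ y = 0 → x ⬝ᵥ y = 0) ∧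
    r = x ⬝ᵥ (M *ᵥ x)}

lemma quad_eq {n p : ℕ} (d : Fin n → ℝ) (B : Matrix (Fin n) (Fin p) ℝ) (y : Fin p → ℝ) :
    y ⬝ᵥ ((Bᵀ * Matrix.diagonal d * B) *ᵥ y) = ∑ i, d i * (B *ᵥ y) i ^ 2 := by
  rw [← Matrix.mulVec_mulVec, ← Matrix.mulVec_mulVec, Matrix.dotProduct_mulVec,
    Matrix.vecMul_transpose]
  simp only [dotProduct, Matrix.mulVec_diagonal]
  exact Finset.sum_congr rfl fun i _ => by ring

lemma psd_sub_diag {n p : ℕ} (a b : Fin n → ℝ) (hab : ∀ i, a i ≤ b i)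
    (B : Matrix (Fin n) (Fin p) ℝ) :
    (Bᵀ * Matrix.diagonal b * B - Bᵀ * Matrix.diagonal a * B).PosSemidef := by
  have h : Bᵀ * Matrix.diagonal b * B - Bᵀ * Matrix.diagonal a * B
      = Bᵀ * Matrix.diagonal (b - a) * B := by
    have hdiag : Matrix.diagonal (b - a) = Matrix.diagonal b - Matrix.diagonal a := by
      ext i j
      by_cases hij : i = j <;> simp [Matrix.diagonal_apply, hij]
    rw [hdiag, Matrix.mul_sub, Matrix.sub_mul]
  rw [h, ← Matrix.conjTranspose_eq_transpose_of_trivial]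
  exact (Matrix.posSemidef_diagonal_iff.mpr fun i => sub_nonneg.mpr (hab i)
    ).conjTranspose_mul_mul_same B

lemma ker_iff {n p : ℕ} (d : Fin n → ℝ) (hd : ∀ i, 0 < d i) (B : Matrix (Fin n) (Fin p) ℝ)
    (y : Fin p → ℝ) : (Bᵀ * Matrix.diagonal d * B) *ᵥ y = 0 ↔ B *ᵥ y = 0 := by
  constructor
  · intro h
    have h0 : y ⬝ᵥ ((Bᵀ * Matrix.diagonal d * B) *ᵥ y) = 0 := by
      rw [h, dotProduct_zero]
    rw [quad_eq] at h0
    have hz := (Finset.sum_eq_zero_iff_of_nonneg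
      (fun i _ => mul_nonneg (hd i).le (sq_nonneg _))).mp h0
    funext i
    have hi := hz i (Finset.mem_univ i)
    have h2 : ((B *ᵥ y) i) ^ 2 = 0 := (mul_eq_zero.mp hi).resolve_left (hd i).ne'
    simpa using (pow_eq_zero_iff two_ne_zero).mp h2
  · intro h
    rw [← Matrix.mulVec_mulVec, ← Matrix.mulVec_mulVec, h]
    simp

lemma bdd_quad {m : ℕ} (M : Matrix (Fin m) (Fin m) ℝ) :
    BddAbove (Set.range fun x : {x : Fin m → ℝ // x ⬝ᵥ x = 1} =>
      (x : Fin m → ℝ) ⬝ᵥ (M *ᵥ (x : Fin m → ℝ))) := by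
  refine ⟨∑ i, ∑ j, |M i j|, ?_⟩
  rintro r ⟨x, rfl⟩
  have hx1 : ∀ i, |(x : Fin m → ℝ) i| ≤ 1 := by
    intro i
    rw [← sq_le_one_iff_abs_le_one]
    have h := x.2
    calc ((x : Fin m → ℝ) i) ^ 2 = (x : Fin m → ℝ) i * (x : Fin m → ℝ) i := sq _
      _ ≤ ∑ j, (x : Fin m → ℝ) j * (x : Fin m → ℝ) j :=
        Finset.single_le_sum (f := fun j => (x : Fin m → ℝ) j * (x : Fin m → ℝ) j)
          (fun j _ => mul_self_nonneg _) (Finset.mem_univ i)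
      _ = 1 := h
  calc (x : Fin m → ℝ) ⬝ᵥ (M *ᵥ (x : Fin m → ℝ))
      ≤ |(x : Fin m → ℝ) ⬝ᵥ (M *ᵥ (x : Fin m → ℝ))| := le_abs_self _
    _ ≤ ∑ i, |(x : Fin m → ℝ) i * (M *ᵥ (x : Fin m → ℝ)) i| :=
        Finset.abs_sum_le_sum_abs _ _
    _ ≤ ∑ i, ∑ j, |M i j| := by
        refine Finset.sum_le_sum fun i _ => ?_
        rw [abs_mul]
        calc |(x : Fin m → ℝ) i| * |(M *ᵥ (x : Fin m → ℝ)) i|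
            ≤ 1 * |(M *ᵥ (x : Fin m → ℝ)) i| :=
              mul_le_mul_of_nonneg_right (hx1 i) (abs_nonneg _)
          _ = |∑ j, M i j * (x : Fin m → ℝ) j| := by rw [one_mul]; rfl
          _ ≤ ∑ j, |M i j * (x : Fin m → ℝ) j| := Finset.abs_sum_le_sum_abs _ _
          _ ≤ ∑ j, |M i j| := by
              refine Finset.sum_le_sum fun j _ => ?_
              rw [abs_mul]
              calc |M i j| * |(x : Fin m → ℝ) j| ≤ |M i j| * 1 :=
                mul_le_mul_of_nonneg_left (hx1 j) (abs_nonneg _)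
                _ = |M i j| := mul_one _

theorem stmt16 {n p : ℕ} (k : ℕ) (w : Fin n → ℝ) (hw : ∀ i, 1 ≤ w i)
    (B : Matrix (Fin n) (Fin p) ℝ)
    (W Wh : Matrix (Fin n) (Fin n) ℝ)
    (hW : W = Matrix.diagonal w)
    (hWh : Wh = Matrix.diagonal fun i =>
      (((2 : ℝ) ^ k)⁻¹ * ((⌈Real.sqrt (w i) * 2 ^ k⌉ : ℤ) : ℝ)) ^ 2) :
    (Bᵀ * Wh * B - Bᵀ * W * B).PosSemidef ∧
      ((1 + (2 : ℝ) ^ (2 - (k : ℤ))) • (Bᵀ * W * B) - Bᵀ * Wh * B).PosSemidef ∧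
      lmax (Bᵀ * Wh * B) ≤ (1 + (2 : ℝ) ^ (2 - (k : ℤ))) * lmax (Bᵀ * W * B) ∧
      lminPos (Bᵀ * W * B) ≤ lminPos (Bᵀ * Wh * B) := by
  set d : Fin n → ℝ := fun i =>
    (((2 : ℝ) ^ k)⁻¹ * ((⌈Real.sqrt (w i) * 2 ^ k⌉ : ℤ) : ℝ)) ^ 2 with hd
  set c : ℝ := (2 : ℝ) ^ (2 - (k : ℤ)) with hcdef
  have he : (0 : ℝ) < 2 ^ k := by positivity
  have hc4 : c = 4 * ((2 : ℝ) ^ k)⁻¹ := by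
    rw [hcdef, zpow_sub₀ (two_ne_zero), zpow_natCast]
    norm_num [div_eq_mul_inv]
  have hc0 : 0 ≤ c := by rw [hc4]; positivity
  -- pointwise bounds
  have hwd : ∀ i, w i ≤ d i := by
    intro i
    have hs : Real.sqrt (w i) * 2 ^ k ≤ (⌈Real.sqrt (w i) * 2 ^ k⌉ : ℝ) := Int.le_ceil _
    have hs0 : 0 ≤ Real.sqrt (w i) := Real.sqrt_nonneg _
    have : Real.sqrt (w i) ≤ ((2 : ℝ) ^ k)⁻¹ * ((⌈Real.sqrt (w i) * 2 ^ k⌉ : ℤ) : ℝ) := by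
      rw [inv_mul_eq_div, le_div_iff₀ he]
      exact hs
    calc w i = Real.sqrt (w i) ^ 2 := (Real.sq_sqrt (le_trans zero_le_one (hw i))).symm
      _ ≤ (((2 : ℝ) ^ k)⁻¹ * ((⌈Real.sqrt (w i) * 2 ^ k⌉ : ℤ) : ℝ)) ^ 2 :=
        pow_le_pow_left₀ hs0 this 2
  have hd_pos : ∀ i, 0 < d i := fun i => lt_of_lt_of_le (lt_of_lt_of_le one_pos (hw i)) (hwd i)
  have hdc : ∀ i, d i ≤ (1 + c) * w i := by
    intro i
    set s := Real.sqrt (w i) with hsdef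
    have hs1 : 1 ≤ s := by
      rw [hsdef, show (1:ℝ) = Real.sqrt 1 by simp]
      exact Real.sqrt_le_sqrt (hw i)
    have hs2 : s ^ 2 = w i := Real.sq_sqrt (le_trans zero_le_one (hw i))
    have hceil : ((⌈s * 2 ^ k⌉ : ℤ) : ℝ) ≤ s * 2 ^ k + 1 := (Int.ceil_lt_add_one _).le
    have hm0 : (0:ℝ) ≤ ((⌈s * 2 ^ k⌉ : ℤ) : ℝ) := by
      refine le_trans ?_ (Int.le_ceil _)
      positivity
    set t : ℝ := ((2 : ℝ) ^ k)⁻¹ with htdef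
    have ht0 : 0 < t := by positivity
    have ht1 : t ≤ 1 := by
      rw [htdef]
      exact inv_le_one_of_one_le₀ (one_le_pow₀ one_le_two)
    have hte : t * 2 ^ k = 1 := inv_mul_cancel₀ he.ne'
    have hub : t * ((⌈s * 2 ^ k⌉ : ℤ) : ℝ) ≤ s + t := by
      calc t * ((⌈s * 2 ^ k⌉ : ℤ) : ℝ) ≤ t * (s * 2 ^ k + 1) :=
        mul_le_mul_of_nonneg_left hceil ht0.le
        _ = s * (t * 2 ^ k) + t := by ring
        _ = s + t := by rw [hte]; ring
    have hlb : 0 ≤ t * ((⌈s * 2 ^ k⌉ : ℤ) : ℝ) := mul_nonneg ht0.le hm0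
    have : (t * ((⌈s * 2 ^ k⌉ : ℤ) : ℝ)) ^ 2 ≤ (1 + 4 * t) * s ^ 2 := by
      nlinarith [sq_nonneg (s - 1), sq_nonneg t, mul_pos ht0 ht0]
    calc d i = (t * ((⌈s * 2 ^ k⌉ : ℤ) : ℝ)) ^ 2 := rfl
      _ ≤ (1 + 4 * t) * s ^ 2 := this
      _ = (1 + c) * w i := by rw [hs2, hc4, htdef]
  -- PSD parts
  have hpsd1 : (Bᵀ * Wh * B - Bᵀ * W * B).PosSemidef := by
    rw [hW, hWh]
    exact psd_sub_diag w d hwd B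
  have hpsd2 : ((1 + c) • (Bᵀ * W * B) - Bᵀ * Wh * B).PosSemidef := by
    have h1 : (1 + c) • (Bᵀ * W * B) = Bᵀ * Matrix.diagonal ((1 + c) • w) * B := by
      rw [hW, Matrix.diagonal_smul, Matrix.mul_smul, Matrix.smul_mul]
    rw [h1, hWh]
    exact psd_sub_diag d ((1 + c) • w) hdc B
  refine ⟨hpsd1, hpsd2, ?_, ?_⟩
  · -- lmax
    by_cases hne : Nonempty {x : Fin p → ℝ // x ⬝ᵥ x = 1}
    · refine ciSup_le fun x => ?_
      have hq2 := hpsd2.dotProduct_mulVec_nonneg (x : Fin p → ℝ)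
      rw [star_trivial, Matrix.sub_mulVec, Matrix.smul_mulVec,
        dotProduct_sub, dotProduct_smul, smul_eq_mul] at hq2
      have hx : (x : Fin p → ℝ) ⬝ᵥ ((Bᵀ * W * B) *ᵥ (x : Fin p → ℝ)) ≤ lmax (Bᵀ * W * B) :=
        le_ciSup (bdd_quad _) x
      calc (x : Fin p → ℝ) ⬝ᵥ ((Bᵀ * Wh * B) *ᵥ (x : Fin p → ℝ))
          ≤ (1 + c) * ((x : Fin p → ℝ) ⬝ᵥ ((Bᵀ * W * B) *ᵥ (x : Fin p → ℝ))) := by linarith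
        _ ≤ (1 + c) * lmax (Bᵀ * W * B) :=
          mul_le_mul_of_nonneg_left hx (by linarith)
    · rw [not_nonempty_iff] at hne
      rw [lmax, lmax, Real.iSup_of_isEmpty, Real.iSup_of_isEmpty, mul_zero]
  · -- lminPos
    have hker : ∀ y, (Bᵀ * W * B) *ᵥ y = 0 ↔ (Bᵀ * Wh * B) *ᵥ y = 0 := by
      intro y
      rw [hW, hWh, ker_iff w (fun i => lt_of_lt_of_le one_pos (hw i)) B y,
        ker_iff d hd_pos B y]
    set SM := {r : ℝ | ∃ x : Fin p → ℝ, x ⬝ᵥ x = 1 ∧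
      (∀ y, (Bᵀ * W * B) *ᵥ y = 0 → x ⬝ᵥ y = 0) ∧ r = x ⬝ᵥ ((Bᵀ * W * B) *ᵥ x)} with hSM
    set SN := {r : ℝ | ∃ x : Fin p → ℝ, x ⬝ᵥ x = 1 ∧
      (∀ y, (Bᵀ * Wh * B) *ᵥ y = 0 → x ⬝ᵥ y = 0) ∧ r = x ⬝ᵥ ((Bᵀ * Wh * B) *ᵥ x)} with hSN
    have hbddM : BddBelow SM := by
      refine ⟨0, ?_⟩
      rintro r ⟨x, hx1, hx2, rfl⟩
      rw [hW, quad_eq]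
      exact Finset.sum_nonneg fun i _ =>
        mul_nonneg (le_trans zero_le_one (hw i)) (sq_nonneg _)
    by_cases hne : SN.Nonempty
    · refine le_csInf hne ?_
      rintro r ⟨x, hx1, hx2, rfl⟩
      have hmem : x ⬝ᵥ ((Bᵀ * W * B) *ᵥ x) ∈ SM :=
        ⟨x, hx1, fun y hy => hx2 y ((hker y).mp hy), rfl⟩
      have hle : x ⬝ᵥ ((Bᵀ * W * B) *ᵥ x) ≤ x ⬝ᵥ ((Bᵀ * Wh * B) *ᵥ x) := by
        have hq := hpsd1.dotProduct_mulVec_nonneg x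
        rw [star_trivial, Matrix.sub_mulVec, dotProduct_sub] at hq
        linarith
      exact le_trans (csInf_le hbddM hmem) hle
    · have hSMe : SM = ∅ := by
        rw [Set.eq_empty_iff_forall_notMem]
        rintro r ⟨x, hx1, hx2, rfl⟩
        exact hne ⟨x ⬝ᵥ ((Bᵀ * Wh * B) *ᵥ x), x, hx1,
          fun y hy => hx2 y ((hker y).mpr hy), rfl⟩
      rw [Set.not_nonempty_iff_eq_empty] at hne
      rw [lminPos, lminPos, ← hSM, ← hSN, hSMe, hne]
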